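/- arXiv:1805.07844 — 4 statements merged into one kernel-verified Lean document; each statement's English description precedes it below -/
import Mathlib

section
/- Let φ be a norm on a finite-dimensional inner product space that is decomposable with respect to a subspace pair (M, M̄⊥) with M ⊆ M̄, i.e., φ(x+y) = φ(x) + φ(y) for all x ∈ M, y ∈ M̄⊥. Let θ⋆ be arbitrary, and let θ satisfy φ(θ) ≤ φ(θ⋆). Then with Δ = θ - θ⋆, φ(Π_{M̄⊥}(Δ)) ≤ φ(Π_{M̄}(Δ)) + 2φ(Π_{M⊥}(θ⋆)), where Π_S denotes orthogonal projection onto S. -/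
/-- Decomposability cone lemma: if `φ` is a norm decomposable with respect to `(M, M̄ᗮ)` and
`φ θ ≤ φ θ⋆`, then the error `Δ = θ - θ⋆` satisfies
`φ(Π_{M̄ᗮ} Δ) ≤ φ(Π_{M̄} Δ) + 2 φ(Π_{Mᗮ} θ⋆)`. -/
theorem decomposable_cone {E : Type*} [NormedAddCommGroup E] [InnerProductSpace ℝ E]
    [FiniteDimensional ℝ E]
    (M Mbar : Submodule ℝ E) (hMM : M ≤ Mbar)
    (φ : E → ℝ)
    (hφ_nonneg : ∀ x, 0 ≤ φ x)
    (hφ_triangle : ∀ x y, φ (x + y) ≤ φ x + φ y)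
    (hφ_neg : ∀ x, φ (-x) = φ x)
    (hdecomp : ∀ x ∈ M, ∀ y ∈ Mbarᗮ, φ (x + y) = φ x + φ y)
    (θ θstar : E) (hθ : φ θ ≤ φ θstar) :
    φ ((Submodule.orthogonalProjectionOnto Mbarᗮ (θ - θstar) : E)) ≤
      φ ((Submodule.orthogonalProjectionOnto Mbar (θ - θstar) : E)) +
        2 * φ ((Submodule.orthogonalProjectionOnto Mᗮ θstar : E)) := by
  set Δ := θ - θstar with hΔ
  set a : E := (Submodule.orthogonalProjectionOnto M θstar : E) with ha
  set b : E := (Submodule.orthogonalProjectionOnto Mᗮ θstar : E) with hb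
  set c : E := (Submodule.orthogonalProjectionOnto Mbar Δ : E) with hc
  set d : E := (Submodule.orthogonalProjectionOnto Mbarᗮ Δ : E) with hd
  have hab : a + b = θstar := M.starProjection_add_starProjection_orthogonal θstar
  have hcd : c + d = Δ := Mbar.starProjection_add_starProjection_orthogonal Δ
  have haM : a ∈ M := (Submodule.orthogonalProjectionOnto M θstar).2
  have hdM : d ∈ Mbarᗮ := (Submodule.orthogonalProjectionOnto Mbarᗮ Δ).2
  have hdec : φ (a + d) = φ a + φ d := hdecomp a haM d hdM
  -- φ (a + d) ≤ φ θ + φ b + φ c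
  have key : φ (a + d) ≤ φ θ + (φ b + φ c) := by
    have h1 : a + d = θ + (-(b + c)) := by
      have : θ = θstar + Δ := by rw [hΔ]; abel
      rw [this, ← hab, ← hcd]; abel
    calc φ (a + d) = φ (θ + (-(b + c))) := by rw [h1]
      _ ≤ φ θ + φ (-(b + c)) := hφ_triangle _ _
      _ = φ θ + φ (b + c) := by rw [hφ_neg]
      _ ≤ φ θ + (φ b + φ c) := by linarith [hφ_triangle b c]
  have hstar : φ θstar ≤ φ a + φ b := by rw [← hab]; exact hφ_triangle a b
  linarith [hdec, key, hθ, hstar]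
end

section
/- Under decomposability of φ with respect to (M, M̄⊥), if φ(θ) ≤ φ(θ⋆) and Δ = θ - θ⋆, then φ(Δ) ≤ 2φ(Π_{M̄}(Δ)) + 2φ(Π_{M⊥}(θ⋆)). -/
/-- Under decomposability of `φ` with respect to `(M, M̄ᗮ)`, if `φ θ ≤ φ θ⋆` then the error
`Δ = θ - θ⋆` satisfies `φ Δ ≤ 2 φ(Π_{M̄} Δ) + 2 φ(Π_{Mᗮ} θ⋆)`. -/
theorem decomposable_error_bound {E : Type*} [NormedAddCommGroup E] [InnerProductSpace ℝ E]
    [FiniteDimensional ℝ E]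
    (M Mbar : Submodule ℝ E) (hMM : M ≤ Mbar)
    (φ : E → ℝ)
    (hφ_nonneg : ∀ x, 0 ≤ φ x)
    (hφ_triangle : ∀ x y, φ (x + y) ≤ φ x + φ y)
    (hφ_neg : ∀ x, φ (-x) = φ x)
    (hdecomp : ∀ x ∈ M, ∀ y ∈ Mbarᗮ, φ (x + y) = φ x + φ y)
    (θ θstar : E) (hθ : φ θ ≤ φ θstar) :
    φ (θ - θstar) ≤
      2 * φ ((Submodule.orthogonalProjectionOnto Mbar (θ - θstar) : E)) +
        2 * φ ((Submodule.orthogonalProjectionOnto Mᗮ θstar : E)) := by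
  set Δ := θ - θstar with hΔ
  set a : E := (Submodule.orthogonalProjectionOnto M θstar : E) with ha
  set b : E := (Submodule.orthogonalProjectionOnto Mᗮ θstar : E) with hb
  set c : E := (Submodule.orthogonalProjectionOnto Mbar Δ : E) with hc
  set d : E := (Submodule.orthogonalProjectionOnto Mbarᗮ Δ : E) with hd
  have hstar : θstar = a + b := (Submodule.starProjection_add_starProjection_orthogonal (K := M) θstar).symm
  have hΔsum : Δ = c + d := (Submodule.starProjection_add_starProjection_orthogonal (K := Mbar) Δ).symm
  have haM : a ∈ M := SetLike.coe_mem _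
  have hdMb : d ∈ Mbarᗮ := SetLike.coe_mem _
  have hdec : φ (a + d) = φ a + φ d := hdecomp a haM d hdMb
  have hθeq : θ = a + b + (c + d) := by rw [← hstar, ← hΔsum]; simp [hΔ]
  have h1 : φ (a + d) ≤ φ θ + φ b + φ c := by
    have : a + d = θ + -b + -c := by rw [hθeq]; abel
    calc φ (a + d) = φ (θ + -b + -c) := by rw [this]
      _ ≤ φ (θ + -b) + φ (-c) := hφ_triangle _ _
      _ ≤ φ θ + φ (-b) + φ (-c) := by linarith [hφ_triangle θ (-b)]
      _ = φ θ + φ b + φ c := by rw [hφ_neg, hφ_neg]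
  have h2 : φ θstar ≤ φ a + φ b := by rw [hstar]; exact hφ_triangle a b
  have h3 : φ Δ ≤ φ c + φ d := by rw [hΔsum]; exact hφ_triangle c d
  linarith [hdec]
end

section
/- If X and Y are matrices in ℝ^{d×d} whose column spaces are orthogonal and whose row spaces are orthogonal, then ‖X + Y‖_* = ‖X‖_* + ‖Y‖_*, where ‖·‖_* denotes the nuclear norm. -/
open Matrix

/-- The positive semidefinite square root of a positive semidefinite matrix
(the definition `Matrix.PosSemidef.sqrt` of the older Mathlib, since removed). -/
noncomputable def posSemidefSqrtOld {n : Type*} [Fintype n] [DecidableEq n]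
    {A : Matrix n n ℝ} (hA : A.PosSemidef) : Matrix n n ℝ :=
  hA.1.eigenvectorUnitary.1 * Matrix.diagonal ((↑) ∘ (√·) ∘ hA.1.eigenvalues) *
    (star hA.1.eigenvectorUnitary : Matrix n n ℝ)

section sqrtPort

open scoped MatrixOrder

noncomputable abbrev Matrix.PosSemidef.sqrt {n : Type*} [Fintype n] [DecidableEq n]
    {A : Matrix n n ℝ} (hA : A.PosSemidef) : Matrix n n ℝ :=
  posSemidefSqrtOld hA

lemma Matrix.PosSemidef.sqrt_eq_cfcSqrt {n : Type*} [Fintype n] [DecidableEq n]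
    {A : Matrix n n ℝ} (hA : A.PosSemidef) : hA.sqrt = CFC.sqrt A := by
  rw [CFC.sqrt_eq_cfc, cfc_nnreal_eq_real _ A, hA.1.cfc_eq]
  simp [IsHermitian.cfc, Matrix.PosSemidef.sqrt, posSemidefSqrtOld, Function.comp_def,
    hA.eigenvalues_nonneg]

lemma Matrix.PosSemidef.posSemidef_sqrt {n : Type*} [Fintype n] [DecidableEq n]
    {A : Matrix n n ℝ} (hA : A.PosSemidef) : hA.sqrt.PosSemidef := by
  rw [hA.sqrt_eq_cfcSqrt]; exact (CFC.sqrt_nonneg A).posSemidef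

lemma Matrix.PosSemidef.sqrt_mul_self {n : Type*} [Fintype n] [DecidableEq n]
    {A : Matrix n n ℝ} (hA : A.PosSemidef) : hA.sqrt * hA.sqrt = A := by
  rw [hA.sqrt_eq_cfcSqrt]; exact CFC.sqrt_mul_sqrt_self A hA.nonneg

lemma Matrix.PosSemidef.sq_sqrt {n : Type*} [Fintype n] [DecidableEq n]
    {A : Matrix n n ℝ} (hA : A.PosSemidef) : hA.sqrt ^ 2 = A := by
  rw [sq, hA.sqrt_mul_self]

lemma Matrix.PosSemidef.eq_sqrt_of_sq_eq {n : Type*} [Fintype n] [DecidableEq n]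
    {A B : Matrix n n ℝ} (hB : B.PosSemidef) (hA : A.PosSemidef) (h : B ^ 2 = A) :
    B = hA.sqrt := by
  rw [hA.sqrt_eq_cfcSqrt]
  exact (CFC.sqrt_unique (by rw [← sq]; exact h) hB.nonneg).symm

end sqrtPort

lemma sqrt_mul_sqrt_eq_zero {n : ℕ} {A B : Matrix (Fin n) (Fin n) ℝ}
    (hA : A.PosSemidef) (hB : B.PosSemidef) (hAB : A * B = 0) :
    hA.sqrt * hB.sqrt = 0 := by
  have hAh : hA.sqrtᴴ = hA.sqrt := hA.posSemidef_sqrt.1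
  have hBh : hB.sqrtᴴ = hB.sqrt := hB.posSemidef_sqrt.1
  have h1 : hA.sqrt * B = 0 := by
    rw [← conjTranspose_mul_self_mul_eq_zero hA.sqrt B, hAh, hA.sqrt_mul_self, hAB]
  have h2 : hA.sqrt * hB.sqrtᴴ = 0 := by
    rw [← mul_conjTranspose_mul_self_eq_zero hB.sqrt hA.sqrt, hBh, hB.sqrt_mul_self, h1]
  rwa [hBh] at h2

lemma sqrt_add_of_mul_eq_zero {n : ℕ} {A B : Matrix (Fin n) (Fin n) ℝ}
    (hA : A.PosSemidef) (hB : B.PosSemidef) (hAB : A * B = 0) (hBA : B * A = 0)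
    (hS : (A + B).PosSemidef) :
    hS.sqrt = hA.sqrt + hB.sqrt := by
  have h1 := sqrt_mul_sqrt_eq_zero hA hB hAB
  have h2 := sqrt_mul_sqrt_eq_zero hB hA hBA
  have hP : (hA.sqrt + hB.sqrt).PosSemidef := hA.posSemidef_sqrt.add hB.posSemidef_sqrt
  have hsq : (hA.sqrt + hB.sqrt) ^ 2 = A + B := by
    rw [pow_two, add_mul, mul_add, mul_add, h1, h2, hA.sqrt_mul_self, hB.sqrt_mul_self]
    abel
  exact (hP.eq_sqrt_of_sq_eq hS hsq).symm

/-- Nuclear norm: sum of singular values, i.e. the trace of `√(AᵀA)`. -/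
noncomputable def nuclearNorm {m n : ℕ} (A : Matrix (Fin m) (Fin n) ℝ) : ℝ :=
  (posSemidefSqrtOld (Matrix.posSemidef_conjTranspose_mul_self A)).trace

/-- Decomposability of the nuclear norm: if `X` and `Y` have orthogonal column spaces
(`XᵀY = 0`) and orthogonal row spaces (`XYᵀ = 0`), then `‖X+Y‖_* = ‖X‖_* + ‖Y‖_*`. -/
theorem nuclearNorm_add_of_orthogonal {d : ℕ} (X Y : Matrix (Fin d) (Fin d) ℝ)
    (hcol : X.transpose * Y = 0) (hrow : X * Y.transpose = 0) :
    nuclearNorm (X + Y) = nuclearNorm X + nuclearNorm Y := by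
  have hct : ∀ M : Matrix (Fin d) (Fin d) ℝ, Mᴴ = Mᵀ := fun M => rfl
  have hcol' : Xᴴ * Y = 0 := by rw [hct]; exact hcol
  have hrow' : X * Yᴴ = 0 := by rw [hct]; exact hrow
  have hcol2 : Yᴴ * X = 0 := by
    have := congrArg conjTranspose hcol'
    simpa [conjTranspose_mul] using this
  have hrow2 : Y * Xᴴ = 0 := by
    have := congrArg conjTranspose hrow'
    simpa [conjTranspose_mul] using this
  have hsum : (X + Y)ᴴ * (X + Y) = Xᴴ * X + Yᴴ * Y := by
    rw [conjTranspose_add, add_mul, mul_add, mul_add, hcol', hcol2]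
    abel
  have hAB : (Xᴴ * X) * (Yᴴ * Y) = 0 := by
    rw [mul_assoc, ← mul_assoc X Yᴴ Y, hrow', zero_mul, mul_zero]
  have hBA : (Yᴴ * Y) * (Xᴴ * X) = 0 := by
    rw [mul_assoc, ← mul_assoc Y Xᴴ X, hrow2, zero_mul, mul_zero]
  have hX := Matrix.posSemidef_conjTranspose_mul_self X
  have hY := Matrix.posSemidef_conjTranspose_mul_self Y
  have hS : ((X + Y)ᴴ * (X + Y)).PosSemidef := Matrix.posSemidef_conjTranspose_mul_self (X + Y)
  have hS' : (Xᴴ * X + Yᴴ * Y).PosSemidef := hsum ▸ hS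
  have key : hS.sqrt = hX.sqrt + hY.sqrt := by
    have := sqrt_add_of_mul_eq_zero hX hY hAB hBA hS'
    rw [hS.posSemidef_sqrt.eq_sqrt_of_sq_eq hS' (by rw [hS.sq_sqrt, hsum]), this]
  show (hS.sqrt).trace = (hX.sqrt).trace + (hY.sqrt).trace
  rw [key, trace_add]
end

section
/- Let f = (1/n)∑ f_i with each f_i convex and L-smooth, and let θ̂ minimize f over a convex set containing z and y. For an index j drawn uniformly from {1,…,n}, the variance-reduced gradient direction satisfies E_j[‖∇f_j(z) - ∇f_j(y) + ∇f(y) - ∇f(z)‖²] ≤ 4L( [f(z) - f(θ̂)] + [f(y) - f(θ̂)] ), using that ⟨∇f(θ̂), x - θ̂⟩ ≥ 0 for all feasible x. -/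
open RealInnerProductSpace

lemma convex_grad_ineq {E : Type*} [NormedAddCommGroup E] [InnerProductSpace ℝ E]
    [CompleteSpace E] {φ : E → ℝ} {G w : E} (hconv : ConvexOn ℝ Set.univ φ)
    (hgrad : HasGradientAt φ G w) (u : E) : φ w + ⟪G, u - w⟫ ≤ φ u := by
  have hline : HasDerivAt (fun t : ℝ => w + t • (u - w)) (u - w) 0 := by
    simpa using ((hasDerivAt_id (0:ℝ)).smul_const (u - w)).const_add w
  have hψ : HasDerivAt (fun t : ℝ => φ (w + t • (u - w))) ⟪G, u - w⟫ 0 := by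
    have h0 : HasFDerivAt φ (InnerProductSpace.toDual ℝ E G) ((fun t : ℝ => w + t • (u - w)) 0) := by
      simpa using hgrad.hasFDerivAt
    have h1 := h0.comp_hasDerivAt 0 hline
    simp at h1
    exact h1
  have hψconv : ConvexOn ℝ Set.univ (fun t : ℝ => φ (w + t • (u - w))) := by
    have := hconv.comp_affineMap (AffineMap.lineMap w u)
    simp only [Set.preimage_univ] at this
    convert this using 2 with t
    · rfl
    · rfl
    · rfl
    · rfl
    simp [AffineMap.lineMap_apply]
    abel
  have := hψconv.le_slope_of_hasDerivAt (Set.mem_univ 0) (Set.mem_univ 1) zero_lt_one hψ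
  simp [slope_def_field] at this
  linarith [this]

lemma cocoercive {E : Type*} [NormedAddCommGroup E] [InnerProductSpace ℝ E] [CompleteSpace E]
    {φ : E → ℝ} {G : E → E} {L : ℝ} (hL : 0 ≤ L)
    (hconv : ConvexOn ℝ Set.univ φ) (hgrad : ∀ x, HasGradientAt φ (G x) x)
    (hsmooth : ∀ x y, φ y - φ x - ⟪G x, y - x⟫ ≤ L / 2 * ‖y - x‖ ^ 2)
    (w x : E) : ‖G x - G w‖ ^ 2 ≤ 2 * L * (φ x - φ w - ⟪G w, x - w⟫) := by
  set v := G x - G w with hv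
  have hD0 : 0 ≤ φ x - φ w - ⟪G w, x - w⟫ := by
    have := convex_grad_ineq hconv (hgrad w) x; linarith
  have hstep : ∀ t : ℝ, t * ‖v‖ ^ 2 - L / 2 * t ^ 2 * ‖v‖ ^ 2 ≤ φ x - φ w - ⟪G w, x - w⟫ := by
    intro t
    have h1 := hsmooth x (x - t • v)
    have h2 := convex_grad_ineq hconv (hgrad w) (x - t • v)
    have e1 : x - t • v - x = -(t • v) := by abel
    have e2 : x - t • v - w = (x - w) - t • v := by abel
    have i1 : ⟪G x, x - t • v - x⟫ = -(t * ⟪G x, v⟫) := by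
      rw [e1, inner_neg_right, real_inner_smul_right]
    have i2 : ‖x - t • v - x‖ ^ 2 = t ^ 2 * ‖v‖ ^ 2 := by
      rw [e1, norm_neg, norm_smul, Real.norm_eq_abs, mul_pow, sq_abs]
    have i3 : ⟪G w, x - t • v - w⟫ = ⟪G w, x - w⟫ - t * ⟪G w, v⟫ := by
      rw [e2, inner_sub_right, real_inner_smul_right]
    have i4 : ⟪G x, v⟫ - ⟪G w, v⟫ = ‖v‖ ^ 2 := by
      rw [← inner_sub_left, ← hv, real_inner_self_eq_norm_sq]
    rw [i1, i2] at h1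
    rw [i3] at h2
    have i4t : t * ⟪G x, v⟫ - t * ⟪G w, v⟫ = t * ‖v‖ ^ 2 := by rw [← mul_sub, i4]
    linarith [h1, h2, i4t]
  rcases eq_or_lt_of_le hL with hL0 | hLpos
  · have hlin : ∀ t : ℝ, t * ‖v‖ ^ 2 ≤ φ x - φ w - ⟪G w, x - w⟫ := by
      intro t; have := hstep t; rw [← hL0] at this; linarith [this]
    have hv0 : ‖v‖ ^ 2 ≤ 0 := by
      by_contra h
      push_neg at h
      have := hlin ((φ x - φ w - ⟪G w, x - w⟫ + 1) / ‖v‖ ^ 2)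
      rw [div_mul_cancel₀ _ (ne_of_gt h)] at this
      linarith
    nlinarith [hv0]
  · have h := hstep (1 / L)
    have hL' : L ≠ 0 := ne_of_gt hLpos
    have e : (1 / L) * ‖v‖ ^ 2 - L / 2 * (1 / L) ^ 2 * ‖v‖ ^ 2 = ‖v‖ ^ 2 / (2 * L) := by
      field_simp; ring
    rw [e, div_le_iff₀ (by linarith : (0:ℝ) < 2 * L)] at h
    nlinarith [h]

/-- Variance bound for the SVRG-style gradient estimator: for `f = (1/n)∑ fᵢ` with each `fᵢ`
convex and `L`-smooth, and `θ̂` a constrained minimizer of `f`,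
`E_j ‖∇f_j(z) - ∇f_j(y) + ∇f(y) - ∇f(z)‖² ≤ 4L([f(z) - f(θ̂)] + [f(y) - f(θ̂)])`. -/
theorem svrg_variance_bound {d n : ℕ} (hn : 0 < n)
    (fi : Fin n → EuclideanSpace ℝ (Fin d) → ℝ)
    (gi : Fin n → EuclideanSpace ℝ (Fin d) → EuclideanSpace ℝ (Fin d))
    (f : EuclideanSpace ℝ (Fin d) → ℝ) (g : EuclideanSpace ℝ (Fin d) → EuclideanSpace ℝ (Fin d))
    (L : ℝ) (hL : 0 ≤ L)
    (hdiff : ∀ i x, HasGradientAt (fi i) (gi i x) x)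
    (hconv : ∀ i, ConvexOn ℝ Set.univ (fi i))
    (hsmooth : ∀ i x y, fi i y - fi i x - ⟪gi i x, y - x⟫ ≤ L / 2 * ‖y - x‖ ^ 2)
    (hf : ∀ x, f x = (n : ℝ)⁻¹ * ∑ i, fi i x)
    (hg : ∀ x, g x = (n : ℝ)⁻¹ • ∑ i, gi i x)
    (Ω : Set (EuclideanSpace ℝ (Fin d))) (hΩ : Convex ℝ Ω)
    (θhat : EuclideanSpace ℝ (Fin d)) (hθhatΩ : θhat ∈ Ω)
    (hmin : ∀ x ∈ Ω, f θhat ≤ f x)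
    (hopt : ∀ x ∈ Ω, ⟪g θhat, x - θhat⟫ ≥ 0)
    (z y : EuclideanSpace ℝ (Fin d)) (hz : z ∈ Ω) (hy : y ∈ Ω) :
    (n : ℝ)⁻¹ * ∑ j, ‖gi j z - gi j y + g y - g z‖ ^ 2 ≤
      4 * L * ((f z - f θhat) + (f y - f θhat)) := by
  have hn' : (0:ℝ) < (n:ℝ) := by exact_mod_cast hn
  have hnne : (n:ℝ) ≠ 0 := ne_of_gt hn'
  have hsum_f : ∀ x, ∑ i, fi i x = (n:ℝ) * f x := by
    intro x; rw [hf x]; field_simp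
  have hsum_g : ∀ x, ∑ i, gi i x = (n:ℝ) • g x := by
    intro x; rw [hg x, smul_smul, mul_inv_cancel₀ hnne, one_smul]
  set X : Fin n → EuclideanSpace ℝ (Fin d) := fun j => gi j z - gi j y with hX
  set μ : EuclideanSpace ℝ (Fin d) := g z - g y with hμ
  have hXμ : ∀ j, gi j z - gi j y + g y - g z = X j - μ := by
    intro j; simp only [hX, hμ]; abel
  have hsumX : ∑ j, X j = (n:ℝ) • μ := by
    simp only [hX, hμ, Finset.sum_sub_distrib, hsum_g, smul_sub]
  -- variance step
  have hvar : ∑ j, ‖X j - μ‖ ^ 2 ≤ ∑ j, ‖X j‖ ^ 2 := by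
    have hexp : ∑ j, ‖X j - μ‖ ^ 2
        = ∑ j, ‖X j‖ ^ 2 - 2 * ⟪∑ j, X j, μ⟫ + (n:ℝ) * ‖μ‖ ^ 2 := by
      simp only [norm_sub_sq_real, Finset.sum_add_distrib, Finset.sum_sub_distrib,
        Finset.sum_const, Finset.card_univ, Fintype.card_fin, nsmul_eq_mul,
        ← Finset.mul_sum, sum_inner]
    have hinner : ⟪∑ j, X j, μ⟫ = (n:ℝ) * ‖μ‖ ^ 2 := by
      rw [hsumX, real_inner_smul_left, real_inner_self_eq_norm_sq]
    rw [hexp, hinner]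
    nlinarith [sq_nonneg ‖μ‖, hn']
  -- per-index bound
  have coco : ∀ (j : Fin n) (x : EuclideanSpace ℝ (Fin d)),
      ‖gi j x - gi j θhat‖ ^ 2 ≤ 2 * L * (fi j x - fi j θhat - ⟪gi j θhat, x - θhat⟫) :=
    fun j x => cocoercive hL (hconv j) (hdiff j) (hsmooth j) θhat x
  have hXj : ∀ j, ‖X j‖ ^ 2
      ≤ 4 * L * (fi j z - fi j θhat - ⟪gi j θhat, z - θhat⟫)
        + 4 * L * (fi j y - fi j θhat - ⟪gi j θhat, y - θhat⟫) := by
    intro j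
    have e : X j = (gi j z - gi j θhat) - (gi j y - gi j θhat) := by
      simp only [hX]; abel
    have h1 := coco j z
    have h2 := coco j y
    have hsq : ‖X j‖ ^ 2 ≤ 2 * ‖gi j z - gi j θhat‖ ^ 2 + 2 * ‖gi j y - gi j θhat‖ ^ 2 := by
      rw [e]
      nlinarith [norm_sub_le (gi j z - gi j θhat) (gi j y - gi j θhat),
        norm_nonneg ((gi j z - gi j θhat) - (gi j y - gi j θhat)),
        sq_nonneg (‖gi j z - gi j θhat‖ - ‖gi j y - gi j θhat‖)]
    linarith
  -- sum of the Bregman-divergence terms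
  have hD : ∀ x, ∑ j, (fi j x - fi j θhat - ⟪gi j θhat, x - θhat⟫)
      = (n:ℝ) * (f x - f θhat - ⟪g θhat, x - θhat⟫) := by
    intro x
    rw [Finset.sum_sub_distrib, Finset.sum_sub_distrib, hsum_f, hsum_f, ← sum_inner,
      hsum_g, real_inner_smul_left]
    ring
  have hsum_bound : ∑ j, ‖X j‖ ^ 2
      ≤ (n:ℝ) * (4 * L * (f z - f θhat - ⟪g θhat, z - θhat⟫)
        + 4 * L * (f y - f θhat - ⟪g θhat, y - θhat⟫)) := by
    calc ∑ j, ‖X j‖ ^ 2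
        ≤ ∑ j, (4 * L * (fi j z - fi j θhat - ⟪gi j θhat, z - θhat⟫)
          + 4 * L * (fi j y - fi j θhat - ⟪gi j θhat, y - θhat⟫)) :=
          Finset.sum_le_sum fun j _ => hXj j
      _ = (n:ℝ) * (4 * L * (f z - f θhat - ⟪g θhat, z - θhat⟫)
          + 4 * L * (f y - f θhat - ⟪g θhat, y - θhat⟫)) := by
          rw [Finset.sum_add_distrib, ← Finset.mul_sum, ← Finset.mul_sum, hD, hD]; ring
  have hzopt := hopt z hz
  have hyopt := hopt y hy
  have hfinal : (n : ℝ)⁻¹ * ∑ j, ‖gi j z - gi j y + g y - g z‖ ^ 2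
      = (n : ℝ)⁻¹ * ∑ j, ‖X j - μ‖ ^ 2 := by
    congr 1
    exact Finset.sum_congr rfl fun j _ => by rw [hXμ j]
  rw [hfinal]
  have step : (n : ℝ)⁻¹ * ∑ j, ‖X j - μ‖ ^ 2
      ≤ 4 * L * (f z - f θhat - ⟪g θhat, z - θhat⟫)
        + 4 * L * (f y - f θhat - ⟪g θhat, y - θhat⟫) := by
    have h2 : (n : ℝ)⁻¹ * ∑ j, ‖X j - μ‖ ^ 2 ≤ (n : ℝ)⁻¹ * ((n:ℝ) *
        (4 * L * (f z - f θhat - ⟪g θhat, z - θhat⟫)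
          + 4 * L * (f y - f θhat - ⟪g θhat, y - θhat⟫))) :=
      mul_le_mul_of_nonneg_left (le_trans hvar hsum_bound) (by positivity)
    rwa [inv_mul_cancel_left₀ hnne] at h2
  nlinarith [step, mul_nonneg hL hzopt, mul_nonneg hL hyopt]
end
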